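/- If (x,y) ∈ Δ^n × Δ^n satisfies q_k(x,y) = 0 for all k = 1,…,ℓ, then the strategy profile (z,x,y), where z is uniform on S_1, is a Nash equilibrium of the game G_0 in which every player receives payoff 0. Conversely, if (z,x,y) is a Nash equilibrium of G_0 in which every player receives payoff 0, then q_k(x,y) = 0 for all k. -/

import Mathlib

open Finset

noncomputable section

/-- The sign associated to `s ∈ {1,−1}`, with `true` = +1 and `false` = −1. -/
def sgn (s : Bool) : ℝ := if s then 1 else -1

/-- A mixed strategy: a probability distribution on a finite action set. -/
def IsDist {α : Type*} [Fintype α] (x : α → ℝ) : Prop :=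
  (∀ i, 0 ≤ x i) ∧ ∑ i, x i = 1

variable {n ℓ : ℕ}

/-- The homogeneous bilinear form `q_k(x,y) = Σ_{i,j} a_{ij}^{(k)} x_i y_j`. -/
def qform (a : Fin ℓ → Fin (n+1) → Fin (n+1) → ℤ) (k : Fin ℓ)
    (x y : Fin (n+1) → ℝ) : ℝ :=
  ∑ i, ∑ j, (a k i j : ℝ) * x i * y j

/-- Payoff to Player 1 in the game G₀ on the pure profile ((s,k),i,j). -/
def pay1 (a : Fin ℓ → Fin (n+1) → Fin (n+1) → ℤ)
    (sk : Bool × Fin ℓ) (i j : Fin (n+1)) : ℝ :=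
  2 * sgn sk.1 * (a sk.2 i j : ℝ)

/-- Payoff to Player 2 (and to Player 3) in G₀ on the pure profile ((s,k),i,j). -/
def pay23 (a : Fin ℓ → Fin (n+1) → Fin (n+1) → ℤ)
    (sk : Bool × Fin ℓ) (i j : Fin (n+1)) : ℝ :=
  -(sgn sk.1 * (a sk.2 i j : ℝ))

/-- Expected payoff in G₀ for a payoff table `f` under a mixed profile (z,x,y). -/
def Eg (f : Bool × Fin ℓ → Fin (n+1) → Fin (n+1) → ℝ)
    (z : Bool × Fin ℓ → ℝ) (x y : Fin (n+1) → ℝ) : ℝ :=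
  ∑ sk, ∑ i, ∑ j, z sk * x i * y j * f sk i j

/-- `(z,x,y)` is a (mixed) Nash equilibrium of the zero-sum game G₀. -/
def G0NE (a : Fin ℓ → Fin (n+1) → Fin (n+1) → ℤ)
    (z : Bool × Fin ℓ → ℝ) (x y : Fin (n+1) → ℝ) : Prop :=
  IsDist z ∧ IsDist x ∧ IsDist y ∧
  (∀ z', IsDist z' → Eg (pay1 a) z' x y ≤ Eg (pay1 a) z x y) ∧
  (∀ x', IsDist x' → Eg (pay23 a) z x' y ≤ Eg (pay23 a) z x y) ∧
  (∀ y', IsDist y' → Eg (pay23 a) z x y' ≤ Eg (pay23 a) z x y)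

/-- The uniform distribution on Player 1's action set {1,−1}×{1,…,ℓ}. -/
def unif (ℓ : ℕ) : Bool × Fin ℓ → ℝ := fun _ => 1 / (2 * ℓ)

end

/-- If (x,y) ∈ Δⁿ × Δⁿ satisfies q_k(x,y) = 0 for all k, then (unif,x,y) is a Nash
equilibrium of G₀ in which every player receives payoff 0. Conversely, if (z,x,y)
is a Nash equilibrium of G₀ in which every player receives payoff 0, then
q_k(x,y) = 0 for all k. -/

lemma Eg_pay1_eq {n ℓ : ℕ} (a : Fin ℓ → Fin (n+1) → Fin (n+1) → ℤ)
    (z : Bool × Fin ℓ → ℝ) (x y : Fin (n+1) → ℝ) :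
    Eg (pay1 a) z x y = ∑ sk, z sk * (2 * sgn sk.1 * qform a sk.2 x y) := by
  unfold Eg pay1 qform
  simp only [Finset.mul_sum]
  refine Finset.sum_congr rfl fun sk _ => Finset.sum_congr rfl fun i _ =>
    Finset.sum_congr rfl fun j _ => by ring

lemma Eg_scale {n ℓ : ℕ} (a : Fin ℓ → Fin (n+1) → Fin (n+1) → ℤ)
    (z : Bool × Fin ℓ → ℝ) (x y : Fin (n+1) → ℝ) :
    Eg (pay1 a) z x y = (-2) * Eg (pay23 a) z x y := by
  unfold Eg pay1 pay23
  simp only [Finset.mul_sum]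
  refine Finset.sum_congr rfl fun sk _ => Finset.sum_congr rfl fun i _ =>
    Finset.sum_congr rfl fun j _ => by ring

lemma Eg_pay1_unif {n ℓ : ℕ} (a : Fin ℓ → Fin (n+1) → Fin (n+1) → ℤ)
    (x y : Fin (n+1) → ℝ) : Eg (pay1 a) (unif ℓ) x y = 0 := by
  rw [Eg_pay1_eq, Fintype.sum_prod_type, Fintype.sum_bool, ← Finset.sum_add_distrib]
  refine Finset.sum_eq_zero fun k _ => ?_
  simp only [sgn, if_true, Bool.false_eq_true, if_false, unif]
  ring

theorem stmt13 {n ℓ : ℕ} (hℓ : 0 < ℓ) (a : Fin ℓ → Fin (n+1) → Fin (n+1) → ℤ) :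
    (∀ x y : Fin (n+1) → ℝ, IsDist x → IsDist y →
      (∀ k, qform a k x y = 0) →
      G0NE a (unif ℓ) x y ∧
        Eg (pay1 a) (unif ℓ) x y = 0 ∧ Eg (pay23 a) (unif ℓ) x y = 0) ∧
    (∀ (z : Bool × Fin ℓ → ℝ) (x y : Fin (n+1) → ℝ),
      G0NE a z x y → Eg (pay1 a) z x y = 0 → Eg (pay23 a) z x y = 0 →
      ∀ k, qform a k x y = 0) := by
  constructor
  · intro x y hx hy hq
    have hunif : IsDist (unif ℓ) := by
      constructor
      · intro i
        unfold unif
        positivity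
      · unfold unif
        rw [Finset.sum_const]
        simp only [Finset.card_univ, Fintype.card_prod, Fintype.card_bool, Fintype.card_fin,
          nsmul_eq_mul]
        have : (ℓ : ℝ) ≠ 0 := Nat.cast_ne_zero.mpr hℓ.ne'
        field_simp
        push_cast
        ring
    have hE1 : ∀ z : Bool × Fin ℓ → ℝ, Eg (pay1 a) z x y = 0 := by
      intro z; rw [Eg_pay1_eq]; simp [hq]
    have hE2 : ∀ z : Bool × Fin ℓ → ℝ, Eg (pay23 a) z x y = 0 := by
      intro z
      have h := Eg_scale a z x y
      have h1 := hE1 z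
      linarith
    have hE3 : ∀ x' y' : Fin (n+1) → ℝ, Eg (pay23 a) (unif ℓ) x' y' = 0 := by
      intro x' y'
      have h := Eg_scale a (unif ℓ) x' y'
      have h1 := Eg_pay1_unif a x' y'
      linarith
    refine ⟨⟨hunif, hx, hy, ?_, ?_, ?_⟩, hE1 _, hE2 _⟩
    · intro z' _; rw [hE1, hE1]
    · intro x' _; rw [hE2, hE3]
    · intro y' _; rw [hE2, hE3]
  · intro z x y hne h1 _ k
    obtain ⟨hz, hx, hy, hbr1, _, _⟩ := hne
    have hdist : ∀ p : Bool × Fin ℓ, IsDist (fun sk => if sk = p then (1:ℝ) else 0) := by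
      intro p
      refine ⟨fun i => by positivity, ?_⟩
      simp
    have hval : ∀ p : Bool × Fin ℓ,
        Eg (pay1 a) (fun sk => if sk = p then (1:ℝ) else 0) x y
          = 2 * sgn p.1 * qform a p.2 x y := by
      intro p
      rw [Eg_pay1_eq]
      simp [ite_mul, one_mul, zero_mul]
    have h1t := hbr1 _ (hdist (true, k))
    have h1f := hbr1 _ (hdist (false, k))
    rw [hval, h1] at h1t h1f
    norm_num [sgn] at h1t h1f
    linarith
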